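/- The number of permutations σ of [n+1] with σ₁ = 1 and no 3-descents (i.e., D₃(σ) = ∅) equals the Euler number Eₙ, the number of up-down alternating permutations of [n]. -/

import Mathlib

open Finset
open scoped Classical

/-- entry of a permutation of `Fin n` at 0-indexed position `i` (0-based values). -/
def ent {n : ℕ} (σ : Equiv.Perm (Fin n)) (i : ℕ) : ℕ :=
  if h : i < n then (σ ⟨i, h⟩ : ℕ) else 0

/-- the triple `(a, b, c)` of distinct values, reduced to a permutation in `S₃`, is odd. -/
def odd3 (a b c : ℕ) : Prop :=
  ((if b < a then 1 else 0) + (if c < a then 1 else 0) + (if c < b then 1 else 0)) % 2 = 1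

instance (a b c : ℕ) : Decidable (odd3 a b c) := by
  unfold odd3; infer_instance

/-- 3-descent set, 0-indexed positions (position `i` here is paper position `i+1`). -/
def D3 {n : ℕ} (σ : Equiv.Perm (Fin n)) : Finset ℕ :=
  (Finset.range (n - 2)).filter (fun i => odd3 (ent σ i) (ent σ (i + 1)) (ent σ (i + 2)))

/-- alternating descent set, 0-indexed positions. -/
def altD {n : ℕ} (σ : Equiv.Perm (Fin n)) : Finset ℕ :=
  (Finset.range (n - 1)).filter (fun i =>
    (Even i ∧ ent σ (i + 1) < ent σ i) ∨ (¬ Even i ∧ ent σ i < ent σ (i + 1)))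

/-- number of up-down alternating permutations of `[n]` (the Euler number `Eₙ`). -/
noncomputable def EulerNum (n : ℕ) : ℕ :=
  ((Finset.univ : Finset (Equiv.Perm (Fin n))).filter (fun τ =>
    ∀ i ∈ Finset.range (n - 1),
      (Even i ∧ ent τ i < ent τ (i + 1)) ∨ (¬ Even i ∧ ent τ (i + 1) < ent τ i))).card

/-- `c³ᵢ(σ)`, 0-indexed: number of `j > i+1` with `σᵢ σᵢ₊₁ σⱼ` odd. -/
def c3 {n : ℕ} (σ : Equiv.Perm (Fin n)) (i : ℕ) : ℕ :=
  ((Finset.range n).filter (fun j => i + 1 < j ∧ odd3 (ent σ i) (ent σ (i + 1)) (ent σ j))).card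

/-- `ĉᵢ(σ)`, 0-indexed. -/
def chat {n : ℕ} (σ : Equiv.Perm (Fin n)) (i : ℕ) : ℕ :=
  ((Finset.range n).filter (fun j => i < j ∧
    ((Even i ∧ ent σ j < ent σ i) ∨ (¬ Even i ∧ ent σ i < ent σ j)))).card

/-- `i₃` of an arbitrary word `f 0, f 1, ..., f (m-1)`. -/
def i3f (m : ℕ) (f : ℕ → ℕ) : ℕ :=
  ((Finset.range m ×ˢ Finset.range m).filter (fun p =>
    p.1 + 1 < p.2 ∧ odd3 (f p.1) (f (p.1 + 1)) (f p.2))).card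

/-- the 3-inversion statistic `i₃`. -/
def i3 {n : ℕ} (σ : Equiv.Perm (Fin n)) : ℕ := i3f n (ent σ)

/-- the word `1*σ` (0-based values): `0, σ₀+1, σ₁+1, ...`. -/
def oneStar {n : ℕ} (σ : Equiv.Perm (Fin n)) : ℕ → ℕ :=
  fun i => if i = 0 then 0 else ent σ (i - 1) + 1

/-- number of alternating inversions `î(σ)`. -/
def altInv {n : ℕ} (σ : Equiv.Perm (Fin n)) : ℕ :=
  ((Finset.range n ×ˢ Finset.range n).filter (fun p => p.1 < p.2 ∧
    ((Even p.1 ∧ ent σ p.2 < ent σ p.1) ∨ (¬ Even p.1 ∧ ent σ p.1 < ent σ p.2)))).card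

/-- number of inversions of the word `f 0, ..., f (m-1)`. -/
def invf (m : ℕ) (f : ℕ → ℕ) : ℕ :=
  ((Finset.range m ×ˢ Finset.range m).filter (fun p => p.1 < p.2 ∧ f p.2 < f p.1)).card

/-- major index of the word `f 0, ..., f (m-1)` (descent at 0-indexed `i` contributes `i+1`). -/
def majf (m : ℕ) (f : ℕ → ℕ) : ℕ :=
  ∑ i ∈ (Finset.range (m - 1)).filter (fun i => f (i + 1) < f i), (i + 1)

/-- `Â(m, r)`: number of permutations of `[m]` with `r - 1` alternating descents. -/
def Ahat (m r : ℕ) : ℕ :=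
  ((Finset.univ : Finset (Equiv.Perm (Fin m))).filter (fun σ => (altD σ).card + 1 = r)).card

/-- down-up alternating: `σ₁ > σ₂ < σ₃ > ⋯`. -/
def DownUp {n : ℕ} (σ : Equiv.Perm (Fin n)) : Prop :=
  ∀ i ∈ Finset.range (n - 1),
    (Even i ∧ ent σ (i + 1) < ent σ i) ∨ (¬ Even i ∧ ent σ i < ent σ (i + 1))

instance {n : ℕ} (σ : Equiv.Perm (Fin n)) : Decidable (DownUp σ) := by
  unfold DownUp; infer_instance

/-- up-down alternating: `σ₁ < σ₂ > σ₃ < ⋯`. -/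
def UpDown {n : ℕ} (σ : Equiv.Perm (Fin n)) : Prop :=
  ∀ i ∈ Finset.range (n - 1),
    (Even i ∧ ent σ i < ent σ (i + 1)) ∨ (¬ Even i ∧ ent σ (i + 1) < ent σ i)

lemma ent_eq {n : ℕ} (σ : Equiv.Perm (Fin n)) {i : ℕ} (h : i < n) :
    ent σ i = (σ ⟨i, h⟩ : ℕ) := dif_pos h

lemma odd3_self {a b : ℕ} : ¬ odd3 a b b := by
  unfold odd3; split_ifs <;> first | omega | trivial

lemma chat_eq {n : ℕ} (τ : Equiv.Perm (Fin n)) {i : ℕ} (hi : i < n) :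
    chat τ i = ((Finset.univ : Finset (Fin n)).filter (fun v =>
      (∀ j : Fin n, (j : ℕ) < i → v ≠ τ j) ∧
      ((Even i ∧ (v : ℕ) < ent τ i) ∨ (¬ Even i ∧ ent τ i < (v : ℕ))))).card := by
  unfold chat
  refine Finset.card_bij (fun j hj => τ ⟨j, mem_range.1 (mem_filter.1 hj).1⟩) ?_ ?_ ?_
  · intro j hj
    have hjn : j < n := mem_range.1 (mem_filter.1 hj).1
    obtain ⟨hij, hcond⟩ := (mem_filter.1 hj).2
    simp only [mem_filter, mem_univ, true_and]
    refine ⟨fun j' hj' heq => ?_, ?_⟩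
    · have : (⟨j, hjn⟩ : Fin n) = j' := τ.injective heq
      have : j = (j' : ℕ) := congrArg Fin.val this
      omega
    · rw [ent_eq τ hjn] at hcond; exact hcond
  · intro a ha b hb h
    have han : a < n := mem_range.1 (mem_filter.1 ha).1
    have hbn : b < n := mem_range.1 (mem_filter.1 hb).1
    have : (⟨a, han⟩ : Fin n) = ⟨b, hbn⟩ := τ.injective h
    exact congrArg Fin.val this
  · intro v hv
    obtain ⟨havoid, hcond⟩ := (mem_filter.1 hv).2
    set j : Fin n := τ.symm v with hjdef
    have hτj : τ j = v := τ.apply_symm_apply v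
    have hij : i < (j : ℕ) := by
      rcases lt_trichotomy (j : ℕ) i with h | h | h
      · exact absurd hτj.symm (havoid j h)
      · exfalso
        have : τ ⟨i, hi⟩ = v := by rw [← hτj]; congr 1; exact Fin.ext h.symm
        rw [ent_eq τ hi, this] at hcond
        rcases hcond with ⟨_, hlt⟩ | ⟨_, hlt⟩ <;> exact lt_irrefl _ hlt
      · exact h
    refine ⟨(j : ℕ), ?_, ?_⟩
    · refine mem_filter.2 ⟨mem_range.2 j.2, hij, ?_⟩
      rw [ent_eq τ j.2]
      simp only [Fin.eta, hτj]
      exact hcond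
    · simp only [Fin.eta, hτj]

lemma c3_eq {n : ℕ} (σ : Equiv.Perm (Fin n)) {k : ℕ} (hk : k + 1 < n) :
    c3 σ k = ((Finset.univ : Finset (Fin n)).filter (fun v =>
      (∀ j : Fin n, (j : ℕ) ≤ k → v ≠ σ j) ∧
      odd3 (ent σ k) (ent σ (k + 1)) (v : ℕ))).card := by
  unfold c3
  refine Finset.card_bij (fun j hj => σ ⟨j, mem_range.1 (mem_filter.1 hj).1⟩) ?_ ?_ ?_
  · intro j hj
    have hjn : j < n := mem_range.1 (mem_filter.1 hj).1
    obtain ⟨hij, hcond⟩ := (mem_filter.1 hj).2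
    simp only [mem_filter, mem_univ, true_and]
    refine ⟨fun j' hj' heq => ?_, ?_⟩
    · have : (⟨j, hjn⟩ : Fin n) = j' := σ.injective heq
      have : j = (j' : ℕ) := congrArg Fin.val this
      omega
    · rw [ent_eq σ hjn] at hcond; exact hcond
  · intro a ha b hb h
    have han : a < n := mem_range.1 (mem_filter.1 ha).1
    have hbn : b < n := mem_range.1 (mem_filter.1 hb).1
    exact congrArg Fin.val (σ.injective h : (⟨a, han⟩ : Fin n) = ⟨b, hbn⟩)
  · intro v hv
    obtain ⟨havoid, hcond⟩ := (mem_filter.1 hv).2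
    set j : Fin n := σ.symm v with hjdef
    have hτj : σ j = v := σ.apply_symm_apply v
    have hij : k + 1 < (j : ℕ) := by
      rcases lt_trichotomy (j : ℕ) (k + 1) with h | h | h
      · exact absurd hτj.symm (havoid j (by omega))
      · exfalso
        have : σ ⟨k + 1, hk⟩ = v := by rw [← hτj]; congr 1; exact Fin.ext h.symm
        rw [ent_eq σ hk, this] at hcond
        exact odd3_self hcond
      · exact h
    refine ⟨(j : ℕ), ?_, ?_⟩
    · refine mem_filter.2 ⟨mem_range.2 j.2, hij, ?_⟩
      rw [ent_eq σ j.2]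
      simp only [Fin.eta, hτj]
      exact hcond
    · simp only [Fin.eta, hτj]

-- generic: strict count comparison

lemma card_filter_lt {α : Type*} {R : Finset α} {p q : α → Prop} [DecidablePred p] [DecidablePred q]
    (hpq : ∀ v ∈ R, p v → q v) {x : α} (hx : x ∈ R) (hqx : q x) (hpx : ¬ p x) :
    (R.filter p).card < (R.filter q).card := by
  refine Finset.card_lt_card ⟨fun v hv => ?_, fun hcon => ?_⟩
  · obtain ⟨hvR, hpv⟩ := mem_filter.1 hv
    exact mem_filter.2 ⟨hvR, hpq v hvR hpv⟩
  · exact hpx (mem_filter.1 (hcon (mem_filter.2 ⟨hx, hqx⟩))).2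

lemma rank_inj {n : ℕ} {R : Finset (Fin n)} {b b' : Fin n} (hb : b ∈ R) (hb' : b' ∈ R)
    (h : (R.filter (fun v : Fin n => (v : ℕ) < (b : ℕ))).card
       = (R.filter (fun v : Fin n => (v : ℕ) < (b' : ℕ))).card) : b = b' := by
  rcases lt_trichotomy (b : ℕ) (b' : ℕ) with hlt | heq | hlt
  · exact absurd h (Nat.ne_of_lt (card_filter_lt
      (p := fun v : Fin n => (v : ℕ) < (b : ℕ)) (q := fun v : Fin n => (v : ℕ) < (b' : ℕ))
      (fun v _ hv => by omega) hb hlt (by omega)))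
  · exact Fin.ext heq
  · exact absurd h.symm (Nat.ne_of_lt (card_filter_lt
      (p := fun v : Fin n => (v : ℕ) < (b' : ℕ)) (q := fun v : Fin n => (v : ℕ) < (b : ℕ))
      (fun v _ hv => by omega) hb' hlt (by omega)))

lemma rank_inj' {n : ℕ} {R : Finset (Fin n)} {b b' : Fin n} (hb : b ∈ R) (hb' : b' ∈ R)
    (h : (R.filter (fun v : Fin n => (b : ℕ) < (v : ℕ))).card
       = (R.filter (fun v : Fin n => (b' : ℕ) < (v : ℕ))).card) : b = b' := by
  rcases lt_trichotomy (b : ℕ) (b' : ℕ) with hlt | heq | hlt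
  · exact absurd h.symm (Nat.ne_of_lt (card_filter_lt
      (p := fun v : Fin n => (b' : ℕ) < (v : ℕ)) (q := fun v : Fin n => (b : ℕ) < (v : ℕ))
      (fun v _ hv => by omega) hb' hlt (by omega)))
  · exact Fin.ext heq
  · exact absurd h (Nat.ne_of_lt (card_filter_lt
      (p := fun v : Fin n => (b : ℕ) < (v : ℕ)) (q := fun v : Fin n => (b' : ℕ) < (v : ℕ))
      (fun v _ hv => by omega) hb hlt (by omega)))

lemma odd3_char_lt {a b v : ℕ} (h : a < b) (hv : v ≠ a) :
    odd3 a b v ↔ (a < v ∧ v < b) := by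
  unfold odd3; split_ifs <;> simp_all <;> omega

lemma odd3_char_gt {a b v : ℕ} (h : b < a) (hv : v ≠ a) :
    odd3 a b v ↔ (v < b ∨ a < v) := by
  unfold odd3; split_ifs <;> simp_all <;> omega

lemma card_filter_le {α : Type*} {R : Finset α} {p q : α → Prop}
    [DecidablePred p] [DecidablePred q]
    (hpq : ∀ v ∈ R, p v → q v) : (R.filter p).card ≤ (R.filter q).card := by
  refine Finset.card_le_card (fun v hv => ?_)
  obtain ⟨hvR, hpv⟩ := mem_filter.1 hv
  exact mem_filter.2 ⟨hvR, hpq v hvR hpv⟩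

lemma odd3_count_inj {n : ℕ} {R : Finset (Fin n)} {a : ℕ} (ha : ∀ v ∈ R, (v : ℕ) ≠ a)
    {b b' : Fin n} (hb : b ∈ R) (hb' : b' ∈ R)
    (h : (R.filter (fun v : Fin n => odd3 a (b : ℕ) (v : ℕ))).card
       = (R.filter (fun v : Fin n => odd3 a (b' : ℕ) (v : ℕ))).card) : b = b' := by
  have hba : (b : ℕ) ≠ a := ha b hb
  have hb'a : (b' : ℕ) ≠ a := ha b' hb'
  have keylt : ∀ c : Fin n, a < (c : ℕ) →
      R.filter (fun v : Fin n => odd3 a (c : ℕ) (v : ℕ))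
        = R.filter (fun v : Fin n => a < (v : ℕ) ∧ (v : ℕ) < (c : ℕ)) := by
    intro c hc
    apply Finset.filter_congr
    intro v hv
    simp only [odd3_char_lt hc (ha v hv), eq_iff_iff]
  have keygt : ∀ c : Fin n, (c : ℕ) < a →
      R.filter (fun v : Fin n => odd3 a (c : ℕ) (v : ℕ))
        = R.filter (fun v : Fin n => (v : ℕ) < (c : ℕ) ∨ a < (v : ℕ)) := by
    intro c hc
    apply Finset.filter_congr
    intro v hv
    simp only [odd3_char_gt hc (ha v hv), eq_iff_iff]
  rcases Nat.lt_or_ge a (b : ℕ) with hab | hab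
  · rcases Nat.lt_or_ge a (b' : ℕ) with hab' | hab'
    · -- both above a
      rw [keylt b hab, keylt b' hab'] at h
      rcases lt_trichotomy (b : ℕ) (b' : ℕ) with hlt | heq | hlt
      · exact absurd h (Nat.ne_of_lt (card_filter_lt
          (p := fun v : Fin n => a < (v : ℕ) ∧ (v : ℕ) < (b : ℕ))
          (q := fun v : Fin n => a < (v : ℕ) ∧ (v : ℕ) < (b' : ℕ))
          (fun v _ hv => by omega) hb ⟨hab, hlt⟩ (by omega)))
      · exact Fin.ext heq
      · exact absurd h.symm (Nat.ne_of_lt (card_filter_lt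
          (p := fun v : Fin n => a < (v : ℕ) ∧ (v : ℕ) < (b' : ℕ))
          (q := fun v : Fin n => a < (v : ℕ) ∧ (v : ℕ) < (b : ℕ))
          (fun v _ hv => by omega) hb' ⟨hab', hlt⟩ (by omega)))
    · -- a < b, b' < a
      have hb'lt : (b' : ℕ) < a := by omega
      rw [keylt b hab, keygt b' hb'lt] at h
      have h1 : (R.filter (fun v : Fin n => a < (v : ℕ) ∧ (v : ℕ) < (b : ℕ))).card
          < (R.filter (fun v : Fin n => a < (v : ℕ))).card :=
        card_filter_lt (fun v _ hv => hv.1) hb hab (by omega)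
      have h2 : (R.filter (fun v : Fin n => a < (v : ℕ))).card
          ≤ (R.filter (fun v : Fin n => (v : ℕ) < (b' : ℕ) ∨ a < (v : ℕ))).card :=
        card_filter_le (fun v _ hv => Or.inr hv)
      omega
  · have hblt : (b : ℕ) < a := by omega
    rcases Nat.lt_or_ge a (b' : ℕ) with hab' | hab'
    · rw [keygt b hblt, keylt b' hab'] at h
      have h1 : (R.filter (fun v : Fin n => a < (v : ℕ) ∧ (v : ℕ) < (b' : ℕ))).card
          < (R.filter (fun v : Fin n => a < (v : ℕ))).card :=
        card_filter_lt (fun v _ hv => hv.1) hb' hab' (by omega)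
      have h2 : (R.filter (fun v : Fin n => a < (v : ℕ))).card
          ≤ (R.filter (fun v : Fin n => (v : ℕ) < (b : ℕ) ∨ a < (v : ℕ))).card :=
        card_filter_le (fun v _ hv => Or.inr hv)
      omega
    · have hb'lt : (b' : ℕ) < a := by omega
      rw [keygt b hblt, keygt b' hb'lt] at h
      rcases lt_trichotomy (b : ℕ) (b' : ℕ) with hlt | heq | hlt
      · exact absurd h (Nat.ne_of_lt (card_filter_lt
          (p := fun v : Fin n => (v : ℕ) < (b : ℕ) ∨ a < (v : ℕ))
          (q := fun v : Fin n => (v : ℕ) < (b' : ℕ) ∨ a < (v : ℕ))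
          (fun v _ hv => by omega) hb (Or.inl hlt) (by omega)))
      · exact Fin.ext heq
      · exact absurd h.symm (Nat.ne_of_lt (card_filter_lt
          (p := fun v : Fin n => (v : ℕ) < (b' : ℕ) ∨ a < (v : ℕ))
          (q := fun v : Fin n => (v : ℕ) < (b : ℕ) ∨ a < (v : ℕ))
          (fun v _ hv => by omega) hb' (Or.inl hlt) (by omega)))

lemma chat_inj {n : ℕ} {τ τ' : Equiv.Perm (Fin n)}
    (h : ∀ i : ℕ, i < n → chat τ i = chat τ' i) : τ = τ' := by
  have main : ∀ k, ∀ hk : k < n, τ ⟨k, hk⟩ = τ' ⟨k, hk⟩ := by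
    intro k
    induction k using Nat.strong_induction_on with
    | _ k IH =>
      intro hk
      have hagree : ∀ j : Fin n, (j : ℕ) < k → τ j = τ' j := by
        intro j hj
        have := IH (j : ℕ) hj j.2
        simpa using this
      set b := τ ⟨k, hk⟩ with hbdef
      set b' := τ' ⟨k, hk⟩ with hb'def
      set R : Finset (Fin n) :=
        Finset.univ.filter (fun v => ∀ j : Fin n, (j : ℕ) < k → v ≠ τ j) with hR
      have hbR : b ∈ R := by
        rw [hR]; refine mem_filter.2 ⟨mem_univ _, fun j hj heq => ?_⟩
        have : (⟨k, hk⟩ : Fin n) = j := τ.injective heq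
        have : k = (j : ℕ) := congrArg Fin.val this
        omega
      have hb'R : b' ∈ R := by
        rw [hR]; refine mem_filter.2 ⟨mem_univ _, fun j hj heq => ?_⟩
        rw [hagree j hj] at heq
        have : (⟨k, hk⟩ : Fin n) = j := τ'.injective heq
        have : k = (j : ℕ) := congrArg Fin.val this
        omega
      have hcards := h k hk
      rcases Nat.even_or_odd k with hpar | hpar
      · have e1 : chat τ k = (R.filter (fun v : Fin n => (v : ℕ) < (b : ℕ))).card := by
          rw [chat_eq τ hk]
          congr 1
          ext v
          simp only [mem_filter, mem_univ, true_and, hR, hpar, ent_eq τ hk]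
          have : Even k := hpar
          tauto
        have e2 : chat τ' k = (R.filter (fun v : Fin n => (v : ℕ) < (b' : ℕ))).card := by
          rw [chat_eq τ' hk]
          congr 1
          ext v
          simp only [mem_filter, mem_univ, true_and, hR, ent_eq τ' hk]
          have hEk : Even k := hpar
          constructor
          · rintro ⟨hav, hc⟩
            refine ⟨fun j hj => by rw [hagree j hj]; exact hav j hj, ?_⟩
            tauto
          · rintro ⟨hav, hc⟩
            refine ⟨fun j hj => by rw [← hagree j hj]; exact hav j hj, ?_⟩
            tauto
        rw [e1, e2] at hcards
        exact rank_inj hbR hb'R hcards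
      · have hodd : ¬ Even k := Nat.not_even_iff_odd.2 hpar
        have e1 : chat τ k = (R.filter (fun v : Fin n => (b : ℕ) < (v : ℕ))).card := by
          rw [chat_eq τ hk]
          congr 1
          ext v
          simp only [mem_filter, mem_univ, true_and, hR, ent_eq τ hk]
          tauto
        have e2 : chat τ' k = (R.filter (fun v : Fin n => (b' : ℕ) < (v : ℕ))).card := by
          rw [chat_eq τ' hk]
          congr 1
          ext v
          simp only [mem_filter, mem_univ, true_and, hR, ent_eq τ' hk]
          constructor
          · rintro ⟨hav, hc⟩
            refine ⟨fun j hj => by rw [hagree j hj]; exact hav j hj, ?_⟩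
            tauto
          · rintro ⟨hav, hc⟩
            refine ⟨fun j hj => by rw [← hagree j hj]; exact hav j hj, ?_⟩
            tauto
        rw [e1, e2] at hcards
        exact rank_inj' hbR hb'R hcards
  ext p
  have := main (p : ℕ) p.2
  simpa using congrArg Fin.val this

lemma c3_inj {n : ℕ} {σ σ' : Equiv.Perm (Fin (n + 1))}
    (h0 : σ 0 = 0) (h0' : σ' 0 = 0)
    (h : ∀ i : ℕ, i < n → c3 σ i = c3 σ' i) : σ = σ' := by
  have main : ∀ k, ∀ hk : k < n + 1, σ ⟨k, hk⟩ = σ' ⟨k, hk⟩ := by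
    intro k
    induction k using Nat.strong_induction_on with
    | _ k IH =>
      intro hk
      match k with
      | 0 =>
        have : (⟨0, hk⟩ : Fin (n + 1)) = 0 := rfl
        rw [this, h0, h0']
      | (m + 1) =>
        have hm : m < n := by omega
        have hagree : ∀ j : Fin (n + 1), (j : ℕ) ≤ m → σ j = σ' j := by
          intro j hj
          have := IH (j : ℕ) (by omega) j.2
          simpa using this
        set b := σ ⟨m + 1, hk⟩ with hbdef
        set b' := σ' ⟨m + 1, hk⟩ with hb'def
        set R : Finset (Fin (n + 1)) :=
          Finset.univ.filter (fun v => ∀ j : Fin (n + 1), (j : ℕ) ≤ m → v ≠ σ j) with hR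
        have hmn1 : m < n + 1 := by omega
        have hasm : ent σ m = ent σ' m := by
          rw [ent_eq σ hmn1, ent_eq σ' hmn1]
          exact congrArg Fin.val (hagree ⟨m, hmn1⟩ (le_refl m))
        have ha : ∀ v ∈ R, (v : ℕ) ≠ ent σ m := by
          intro v hv
          have hav := (mem_filter.1 hv).2 ⟨m, hmn1⟩ (le_refl m)
          rw [ent_eq σ hmn1]
          intro hcon
          exact hav (Fin.val_injective hcon)
        have hbR : b ∈ R := by
          refine mem_filter.2 ⟨mem_univ _, fun j hj heq => ?_⟩
          have : (⟨m + 1, hk⟩ : Fin (n + 1)) = j := σ.injective heq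
          have : m + 1 = (j : ℕ) := congrArg Fin.val this
          omega
        have hb'R : b' ∈ R := by
          refine mem_filter.2 ⟨mem_univ _, fun j hj heq => ?_⟩
          rw [hagree j hj] at heq
          have : (⟨m + 1, hk⟩ : Fin (n + 1)) = j := σ'.injective heq
          have : m + 1 = (j : ℕ) := congrArg Fin.val this
          omega
        have hcards := h m hm
        have e1 : c3 σ m = (R.filter (fun v : Fin (n + 1) =>
            odd3 (ent σ m) (b : ℕ) (v : ℕ))).card := by
          rw [c3_eq σ hk]
          congr 1
          ext v
          simp only [mem_filter, mem_univ, true_and, hR, ent_eq σ hk]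
          exact Iff.rfl
        have e2 : c3 σ' m = (R.filter (fun v : Fin (n + 1) =>
            odd3 (ent σ m) (b' : ℕ) (v : ℕ))).card := by
          rw [c3_eq σ' hk]
          congr 1
          ext v
          simp only [mem_filter, mem_univ, true_and, hR, ent_eq σ' hk, hasm]
          constructor
          · rintro ⟨hav, hc⟩
            exact ⟨fun j hj => by rw [hagree j hj]; exact hav j hj, hc⟩
          · rintro ⟨hav, hc⟩
            exact ⟨fun j hj => by rw [← hagree j hj]; exact hav j hj, hc⟩
        rw [e1, e2] at hcards
        exact odd3_count_inj ha hbR hb'R hcards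
  ext p
  have := main (p : ℕ) p.2
  simpa using congrArg Fin.val this

lemma ent_ne {n : ℕ} (σ : Equiv.Perm (Fin n)) {i j : ℕ} (hi : i < n) (hj : j < n)
    (hij : i ≠ j) : ent σ i ≠ ent σ j := by
  rw [ent_eq σ hi, ent_eq σ hj]
  intro h
  exact hij (by simpa [Fin.ext_iff] using congrArg Fin.val (σ.injective (Fin.val_injective h)))

lemma filter_gt_card (m k : ℕ) :
    ((Finset.range m).filter (fun j => k < j)).card = m - (k + 1) := by
  have : (Finset.range m).filter (fun j => k < j) = Finset.Ico (k + 1) m := by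
    ext j; simp [Finset.mem_filter, Finset.mem_Ico]; omega
  rw [this, Nat.card_Ico]

lemma alt_char {n : ℕ} (τ : Equiv.Perm (Fin n)) {i : ℕ} (h2 : i + 1 < n) :
    ((Even i ∧ ent τ (i + 1) < ent τ i) ∨ (¬ Even i ∧ ent τ i < ent τ (i + 1))) ↔
      n - 1 - i ≤ chat τ i + chat τ (i + 1) := by
  have hi : i < n := by omega
  set F1 := (Finset.range n).filter (fun j => i < j ∧
    ((Even i ∧ ent τ j < ent τ i) ∨ (¬ Even i ∧ ent τ i < ent τ j))) with hF1
  set F2 := (Finset.range n).filter (fun j => i + 1 < j ∧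
    ((Even (i + 1) ∧ ent τ j < ent τ (i + 1)) ∨ (¬ Even (i + 1) ∧ ent τ (i + 1) < ent τ j)))
    with hF2
  have hc1 : chat τ i = F1.card := rfl
  have hc2 : chat τ (i + 1) = F2.card := rfl
  set J := (Finset.range n).filter (fun j => i + 1 < j) with hJ
  have hJcard : J.card = n - (i + 2) := filter_gt_card n (i + 1)
  have hne : ent τ i ≠ ent τ (i + 1) := ent_ne τ hi h2 (by omega)
  constructor
  · intro hd
    have hmem : i + 1 ∈ F1 := by
      refine mem_filter.2 ⟨mem_range.2 h2, by omega, hd⟩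
    have hcov : insert (i + 1) J ⊆ F1 ∪ F2 := by
      intro j hj
      rcases Finset.mem_insert.1 hj with rfl | hjJ
      · exact Finset.mem_union_left _ hmem
      · obtain ⟨hjr, hij⟩ := mem_filter.1 hjJ
        have hjn := mem_range.1 hjr
        have hxu : ent τ j ≠ ent τ i := ent_ne τ hjn hi (by omega)
        have hxv : ent τ j ≠ ent τ (i + 1) := ent_ne τ hjn h2 (by omega)
        rcases Nat.even_or_odd i with hp | hp
        · have hp1 : ¬ Even (i + 1) := by simp [Nat.even_add_one, hp]
          obtain ⟨-, hvu⟩ : Even i ∧ ent τ (i + 1) < ent τ i := by tauto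
          rcases Nat.lt_or_ge (ent τ j) (ent τ i) with hc | hc
          · exact Finset.mem_union_left _ (mem_filter.2 ⟨hjr, by omega, Or.inl ⟨hp, hc⟩⟩)
          · refine Finset.mem_union_right _ (mem_filter.2 ⟨hjr, hij, Or.inr ⟨hp1, by omega⟩⟩)
        · have hp0 : ¬ Even i := Nat.not_even_iff_odd.2 hp
          have hp1 : Even (i + 1) := by simp [Nat.even_add_one, hp0]
          obtain ⟨-, hvu⟩ : ¬ Even i ∧ ent τ i < ent τ (i + 1) := by tauto
          rcases Nat.lt_or_ge (ent τ j) (ent τ (i + 1)) with hc | hc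
          · exact Finset.mem_union_right _ (mem_filter.2 ⟨hjr, hij, Or.inl ⟨hp1, hc⟩⟩)
          · refine Finset.mem_union_left _ (mem_filter.2 ⟨hjr, by omega, Or.inr ⟨hp0, by omega⟩⟩)
    have h1 : (insert (i + 1) J).card = J.card + 1 := by
      rw [Finset.card_insert_of_notMem]
      intro hcon
      exact absurd (mem_filter.1 hcon).2 (by omega)
    have := Finset.card_le_card hcov
    have := Finset.card_union_le F1 F2
    omega
  · intro hsum
    by_contra hnd
    have hd' : (Even i ∧ ent τ i < ent τ (i + 1)) ∨ (¬ Even i ∧ ent τ (i + 1) < ent τ i) := by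
      rcases Nat.even_or_odd i with hp | hp
      · have : ¬ (ent τ (i + 1) < ent τ i) := fun hc => hnd (Or.inl ⟨hp, hc⟩)
        exact Or.inl ⟨hp, by omega⟩
      · have hp0 : ¬ Even i := Nat.not_even_iff_odd.2 hp
        have : ¬ (ent τ i < ent τ (i + 1)) := fun hc => hnd (Or.inr ⟨hp0, hc⟩)
        exact Or.inr ⟨hp0, by omega⟩
    have hs1 : F1 ⊆ J := by
      intro j hj
      obtain ⟨hjr, hij, hc⟩ := mem_filter.1 hj
      refine mem_filter.2 ⟨hjr, ?_⟩
      rcases Nat.lt_or_ge (i + 1) j with h | h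
      · exact h
      · exfalso
        have : j = i + 1 := by omega
        subst this
        exact hnd hc
    have hs2 : F2 ⊆ J := fun j hj => mem_filter.2 ⟨(mem_filter.1 hj).1, (mem_filter.1 hj).2.1⟩
    have hdisj : Disjoint F1 F2 := by
      rw [Finset.disjoint_left]
      intro j hj1 hj2
      obtain ⟨hjr, hij, hc1'⟩ := mem_filter.1 hj1
      obtain ⟨-, hij2, hc2'⟩ := mem_filter.1 hj2
      rcases Nat.even_or_odd i with hp | hp
      · have hp1 : ¬ Even (i + 1) := by simp [Nat.even_add_one, hp]
        obtain ⟨-, hasc⟩ : Even i ∧ ent τ i < ent τ (i + 1) := by tauto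
        have c1 : ent τ j < ent τ i := by tauto
        have c2 : ent τ (i + 1) < ent τ j := by tauto
        omega
      · have hp0 : ¬ Even i := Nat.not_even_iff_odd.2 hp
        have hp1 : Even (i + 1) := by simp [Nat.even_add_one, hp0]
        obtain ⟨-, hasc⟩ : ¬ Even i ∧ ent τ (i + 1) < ent τ i := by tauto
        have c1 : ent τ i < ent τ j := by tauto
        have c2 : ent τ j < ent τ (i + 1) := by tauto
        omega
    have hle : F1.card + F2.card ≤ J.card := by
      rw [← Finset.card_union_of_disjoint hdisj]
      exact Finset.card_le_card (Finset.union_subset hs1 hs2)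
    omega

lemma odd3_cover' {a b c x : ℕ} (hax : a ≠ x) (hbx : b ≠ x) (hcx : c ≠ x)
    (h : odd3 a b c) : odd3 a b x ∨ odd3 b c x := by
  unfold odd3 at *; split_ifs at * <;> simp_all <;> omega

lemma odd3_disj' {a b c x : ℕ} (hax : a ≠ x) (hbx : b ≠ x) (hcx : c ≠ x)
    (h : ¬ odd3 a b c) : ¬ (odd3 a b x ∧ odd3 b c x) := by
  unfold odd3 at *; split_ifs at * <;> simp_all <;> omega

lemma d3_char {n : ℕ} (σ : Equiv.Perm (Fin (n + 1))) {i : ℕ} (h2 : i + 1 < n) :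
    odd3 (ent σ i) (ent σ (i + 1)) (ent σ (i + 2)) ↔
      n - 1 - i ≤ c3 σ i + c3 σ (i + 1) := by
  have hi : i < n + 1 := by omega
  have hi1 : i + 1 < n + 1 := by omega
  have hi2 : i + 2 < n + 1 := by omega
  set F1 := (Finset.range (n + 1)).filter (fun j => i + 1 < j ∧
    odd3 (ent σ i) (ent σ (i + 1)) (ent σ j)) with hF1
  set F2 := (Finset.range (n + 1)).filter (fun j => i + 2 < j ∧
    odd3 (ent σ (i + 1)) (ent σ (i + 2)) (ent σ j)) with hF2
  have hc1 : c3 σ i = F1.card := rfl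
  have hc2 : c3 σ (i + 1) = F2.card := rfl
  set J := (Finset.range (n + 1)).filter (fun j => i + 2 < j) with hJ
  have hJcard : J.card = n + 1 - (i + 3) := filter_gt_card (n + 1) (i + 2)
  constructor
  · intro hd
    have hmem : i + 2 ∈ F1 := mem_filter.2 ⟨mem_range.2 hi2, by omega, hd⟩
    have hcov : insert (i + 2) J ⊆ F1 ∪ F2 := by
      intro j hj
      rcases Finset.mem_insert.1 hj with rfl | hjJ
      · exact Finset.mem_union_left _ hmem
      · obtain ⟨hjr, hij⟩ := mem_filter.1 hjJ
        have hjn := mem_range.1 hjr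
        have hax : ent σ i ≠ ent σ j := ent_ne σ hi hjn (by omega)
        have hbx : ent σ (i + 1) ≠ ent σ j := ent_ne σ hi1 hjn (by omega)
        have hcx : ent σ (i + 2) ≠ ent σ j := ent_ne σ hi2 hjn (by omega)
        rcases odd3_cover' hax hbx hcx hd with h | h
        · exact Finset.mem_union_left _ (mem_filter.2 ⟨hjr, by omega, h⟩)
        · exact Finset.mem_union_right _ (mem_filter.2 ⟨hjr, hij, h⟩)
    have h1 : (insert (i + 2) J).card = J.card + 1 := by
      rw [Finset.card_insert_of_notMem]
      intro hcon
      exact absurd (mem_filter.1 hcon).2 (by omega)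
    have := Finset.card_le_card hcov
    have := Finset.card_union_le F1 F2
    omega
  · intro hsum
    by_contra hnd
    have hs1 : F1 ⊆ J := by
      intro j hj
      obtain ⟨hjr, hij, hc⟩ := mem_filter.1 hj
      refine mem_filter.2 ⟨hjr, ?_⟩
      rcases Nat.lt_or_ge (i + 2) j with h | h
      · exact h
      · exfalso
        have : j = i + 2 := by omega
        subst this
        exact hnd hc
    have hs2 : F2 ⊆ J := fun j hj => mem_filter.2 ⟨(mem_filter.1 hj).1, (mem_filter.1 hj).2.1⟩
    have hdisj : Disjoint F1 F2 := by
      rw [Finset.disjoint_left]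
      intro j hj1 hj2
      obtain ⟨hjr, hij, hcc1⟩ := mem_filter.1 hj1
      obtain ⟨-, hij2, hcc2⟩ := mem_filter.1 hj2
      have hjn := mem_range.1 hjr
      have hax : ent σ i ≠ ent σ j := ent_ne σ hi hjn (by omega)
      have hbx : ent σ (i + 1) ≠ ent σ j := ent_ne σ hi1 hjn (by omega)
      have hcx : ent σ (i + 2) ≠ ent σ j := ent_ne σ hi2 hjn (by omega)
      exact odd3_disj' hax hbx hcx hnd ⟨hcc1, hcc2⟩
    have hle : F1.card + F2.card ≤ J.card := by
      rw [← Finset.card_union_of_disjoint hdisj]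
      exact Finset.card_le_card (Finset.union_subset hs1 hs2)
    omega

lemma chat_lt {n : ℕ} (τ : Equiv.Perm (Fin n)) {i : ℕ} (hi : i < n) :
    chat τ i < n - i := by
  have h1 : chat τ i ≤ ((Finset.range n).filter (fun j => i < j)).card :=
    card_filter_le (fun j _ hj => hj.1)
  rw [filter_gt_card] at h1
  omega

lemma c3_lt {n : ℕ} (σ : Equiv.Perm (Fin (n + 1))) {i : ℕ} (hi : i < n) :
    c3 σ i < n - i := by
  have h1 : c3 σ i ≤ ((Finset.range (n + 1)).filter (fun j => i + 1 < j)).card :=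
    card_filter_le (fun j _ hj => hj.1)
  rw [filter_gt_card] at h1
  omega

lemma prod_codes (n : ℕ) : ∏ i : Fin n, (n - (i : ℕ)) = n.factorial := by
  induction n with
  | zero => simp
  | succ n ih =>
    rw [Fin.prod_univ_succ]
    simp only [Fin.val_zero, Nat.sub_zero, Fin.val_succ]
    have : ∀ i : Fin n, n + 1 - ((i : ℕ) + 1) = n - (i : ℕ) := fun i => by omega
    rw [Finset.prod_congr rfl (fun i _ => this i), ih, Nat.factorial_succ]

lemma card_codes (n : ℕ) : Fintype.card ((i : Fin n) → Fin (n - (i : ℕ))) = n.factorial := by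
  rw [Fintype.card_pi]
  simp only [Fintype.card_fin]
  exact prod_codes n

def permEquivFixZero (n : ℕ) : {σ : Equiv.Perm (Fin (n + 1)) // σ 0 = 0} ≃ Equiv.Perm (Fin n) where
  toFun σ := (Equiv.Perm.decomposeFin σ.1).2
  invFun π := ⟨Equiv.Perm.decomposeFin.symm (0, π), by simp⟩
  left_inv := by
    rintro ⟨σ, h0⟩
    ext x
    simp only
    have hσ : Equiv.Perm.decomposeFin.symm (Equiv.Perm.decomposeFin σ) = σ :=
      Equiv.symm_apply_apply _ _
    have h1 : (Equiv.Perm.decomposeFin σ).1 = 0 := by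
      have := Equiv.Perm.decomposeFin_symm_apply_zero
        (Equiv.Perm.decomposeFin σ).1 (Equiv.Perm.decomposeFin σ).2
      rw [Prod.mk.eta, hσ] at this
      rw [← this, h0]
    conv_rhs => rw [← hσ]
    rw [← h1]
  right_inv := by
    intro π
    simp

lemma card_fix_zero (n : ℕ) :
    Fintype.card {σ : Equiv.Perm (Fin (n + 1)) // σ 0 = 0} = n.factorial := by
  rw [Fintype.card_congr (permEquivFixZero n), Fintype.card_perm, Fintype.card_fin]

lemma filter_card_eq_nat_card {α : Type*} [Fintype α] (p : α → Prop) [DecidablePred p] :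
    (Finset.univ.filter p).card = Nat.card {x // p x} := by
  rw [Nat.card_eq_fintype_card, Fintype.card_subtype]

theorem stmt3 (n : ℕ) :
    ((Finset.univ : Finset (Equiv.Perm (Fin (n + 1)))).filter
      (fun σ => σ 0 = 0 ∧ D3 σ = (∅ : Finset ℕ))).card = EulerNum n := by
  set C := (i : Fin n) → Fin (n - (i : ℕ)) with hC
  set Q : C → Prop := fun c => ∀ i : ℕ, ∀ h1 : i + 1 < n,
    ((c ⟨i, by omega⟩ : ℕ) + (c ⟨i + 1, h1⟩ : ℕ) < n - 1 - i) with hQ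
  -- the two code maps
  set f : {σ : Equiv.Perm (Fin (n + 1)) // σ 0 = 0} → C :=
    fun σ i => ⟨c3 σ.1 (i : ℕ), c3_lt σ.1 i.2⟩ with hf
  set g : Equiv.Perm (Fin n) → C := fun τ i => ⟨chat τ (i : ℕ), chat_lt τ i.2⟩ with hg
  have hfinj : Function.Injective f := by
    intro σ σ' heq
    apply Subtype.ext
    refine c3_inj σ.2 σ'.2 (fun i hi => ?_)
    have := congrFun heq ⟨i, hi⟩
    exact congrArg Fin.val this
  have hginj : Function.Injective g := by
    intro τ τ' heq
    refine chat_inj (fun i hi => ?_)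
    have := congrFun heq ⟨i, hi⟩
    exact congrArg Fin.val this
  have hfbij : Function.Bijective f := by
    rw [Fintype.bijective_iff_injective_and_card]
    exact ⟨hfinj, by rw [card_fix_zero, card_codes]⟩
  have hgbij : Function.Bijective g := by
    rw [Fintype.bijective_iff_injective_and_card]
    exact ⟨hginj, by rw [Fintype.card_perm, Fintype.card_fin, card_codes]⟩
  set e1 := Equiv.ofBijective f hfbij with he1
  set e2 := Equiv.ofBijective g hgbij with he2
  -- characterizations
  have char1 : ∀ σ : Equiv.Perm (Fin (n + 1)), D3 σ = ∅ ↔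
      (∀ i : ℕ, i + 1 < n → c3 σ i + c3 σ (i + 1) < n - 1 - i) := by
    intro σ
    rw [D3, Finset.filter_eq_empty_iff]
    constructor
    · intro h i hi
      have hmem : i ∈ Finset.range (n + 1 - 2) := mem_range.2 (by omega)
      have := h hmem
      have hd := (d3_char σ hi).not.1 this
      omega
    · intro h i hi
      have hi' : i + 1 < n := by have := mem_range.1 hi; omega
      have := h i hi'
      rw [d3_char σ hi']
      omega
  have char2 : ∀ τ : Equiv.Perm (Fin n),
      (∀ i ∈ Finset.range (n - 1),
        (Even i ∧ ent τ i < ent τ (i + 1)) ∨ (¬ Even i ∧ ent τ (i + 1) < ent τ i)) ↔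
      (∀ i : ℕ, i + 1 < n → chat τ i + chat τ (i + 1) < n - 1 - i) := by
    intro τ
    have key : ∀ i : ℕ, i + 1 < n →
        (((Even i ∧ ent τ i < ent τ (i + 1)) ∨ (¬ Even i ∧ ent τ (i + 1) < ent τ i)) ↔
          chat τ i + chat τ (i + 1) < n - 1 - i) := by
      intro i hi
      have hne : ent τ i ≠ ent τ (i + 1) := ent_ne τ (by omega) hi (by omega)
      have halt := alt_char τ hi
      constructor
      · intro h
        have : ¬ ((Even i ∧ ent τ (i + 1) < ent τ i) ∨ (¬ Even i ∧ ent τ i < ent τ (i + 1))) := by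
          rcases h with ⟨he, hlt⟩ | ⟨he, hlt⟩ <;> rintro (⟨he', hlt'⟩ | ⟨he', hlt'⟩) <;>
            first | omega | exact he' he | exact he he'
        rw [halt.not] at this
        omega
      · intro h
        have h2 : ¬ ((Even i ∧ ent τ (i + 1) < ent τ i) ∨ (¬ Even i ∧ ent τ i < ent τ (i + 1))) := by
          rw [halt]; omega
        rcases Nat.even_or_odd i with hp | hp
        · have : ¬ (ent τ (i + 1) < ent τ i) := fun hc => h2 (Or.inl ⟨hp, hc⟩)
          exact Or.inl ⟨hp, by omega⟩
        · have hp0 : ¬ Even i := Nat.not_even_iff_odd.2 hp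
          have : ¬ (ent τ i < ent τ (i + 1)) := fun hc => h2 (Or.inr ⟨hp0, hc⟩)
          exact Or.inr ⟨hp0, by omega⟩
    constructor
    · intro h i hi
      exact (key i hi).1 (h i (mem_range.2 (by omega)))
    · intro h i hi
      have hi' : i + 1 < n := by have := mem_range.1 hi; omega
      exact (key i hi').2 (h i hi')
  -- transfer via equivs
  have hQf : ∀ σ : {σ : Equiv.Perm (Fin (n + 1)) // σ 0 = 0}, D3 σ.1 = ∅ ↔ Q (e1 σ) := by
    intro σ
    rw [char1 σ.1]
    constructor
    · intro h i h1
      exact h i h1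
    · intro h i h1
      exact h i h1
  have hQg : ∀ τ : Equiv.Perm (Fin n),
      (∀ i ∈ Finset.range (n - 1),
        (Even i ∧ ent τ i < ent τ (i + 1)) ∨ (¬ Even i ∧ ent τ (i + 1) < ent τ i)) ↔ Q (e2 τ) := by
    intro τ
    rw [char2 τ]
    constructor
    · intro h i h1
      exact h i h1
    · intro h i h1
      exact h i h1
  have eqv : {σ : Equiv.Perm (Fin (n + 1)) // σ 0 = 0 ∧ D3 σ = ∅} ≃
      {τ : Equiv.Perm (Fin n) // ∀ i ∈ Finset.range (n - 1),
        (Even i ∧ ent τ i < ent τ (i + 1)) ∨ (¬ Even i ∧ ent τ (i + 1) < ent τ i)} := by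
    refine (Equiv.subtypeSubtypeEquivSubtypeInter _ _).symm.trans
      ((e1.subtypeEquiv hQf).trans ?_)
    exact (e2.subtypeEquiv hQg).symm
  rw [EulerNum, filter_card_eq_nat_card, filter_card_eq_nat_card]
  exact Nat.card_congr eqv
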